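/- If z, m are in the upper half-plane and z = (m²+1)/(m³−m), then |m| ≤ 1 and |m| ≤ 4/Im z. -/

import Mathlib

theorem stmt_8 (z m : ℂ) (hz : 0 < z.im) (hm : 0 < m.im) (hne : m ^ 3 ≠ m)
    (heq : z = (m ^ 2 + 1) / (m ^ 3 - m)) :
    ‖m‖ ≤ 1 ∧ ‖m‖ ≤ 4 / z.im := by
  have hd : m ^ 3 - m ≠ 0 := sub_ne_zero.mpr hne
  have hfac : m ^ 3 - m = m * (m - 1) * (m + 1) := by ring
  have hm0 : m ≠ 0 := by intro h; apply hd; rw [hfac, h]; ring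
  have hm1 : m - 1 ≠ 0 := by
    intro h; apply hd; rw [hfac, h]; ring
  have hm2 : m + 1 ≠ 0 := by
    intro h; apply hd; rw [hfac, h]; ring
  have hz' : z = -m⁻¹ + (m - 1)⁻¹ + (m + 1)⁻¹ := by
    rw [heq, hfac]; field_simp; ring
  have zim : z.im = m.im / Complex.normSq m - m.im / Complex.normSq (m - 1)
      - m.im / Complex.normSq (m + 1) := by
    rw [hz']
    simp [Complex.add_im, Complex.neg_im, Complex.inv_im, Complex.sub_im, Complex.one_im]
    ring
  have ha : 0 < Complex.normSq m := Complex.normSq_pos.mpr hm0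
  have hb : 0 < Complex.normSq (m - 1) := Complex.normSq_pos.mpr hm1
  have hc : 0 < Complex.normSq (m + 1) := Complex.normSq_pos.mpr hm2
  have hsum : Complex.normSq (m - 1) + Complex.normSq (m + 1)
      = 2 * Complex.normSq m + 2 := by
    simp [Complex.normSq_apply, Complex.sub_re, Complex.sub_im, Complex.add_re,
      Complex.add_im, Complex.one_re, Complex.one_im]
    ring
  have hsq : ‖m‖ ^ 2 = Complex.normSq m := Complex.sq_norm m
  have habs0 : 0 ≤ ‖m‖ := norm_nonneg m
  have him : m.im ≤ ‖m‖ := le_trans (le_abs_self _) (Complex.abs_im_le_norm m)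
  have hzim := hz
  rw [zim] at hzim
  have hx : m.im / Complex.normSq m - m.im / Complex.normSq (m - 1)
      - m.im / Complex.normSq (m + 1)
      = m.im * (Complex.normSq (m - 1) * Complex.normSq (m + 1)
        - Complex.normSq m * Complex.normSq (m + 1)
        - Complex.normSq m * Complex.normSq (m - 1))
        / (Complex.normSq m * Complex.normSq (m - 1) * Complex.normSq (m + 1)) := by
    field_simp
  rw [hx] at hzim
  have hdenpos : 0 < Complex.normSq m * Complex.normSq (m - 1) * Complex.normSq (m + 1) :=
    mul_pos (mul_pos ha hb) hc
  have hnum : 0 < m.im * (Complex.normSq (m - 1) * Complex.normSq (m + 1)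
        - Complex.normSq m * Complex.normSq (m + 1)
        - Complex.normSq m * Complex.normSq (m - 1)) := by
    by_contra h
    push_neg at h
    have := div_nonpos_of_nonpos_of_nonneg h hdenpos.le
    linarith
  have key : Complex.normSq m * Complex.normSq (m + 1)
      + Complex.normSq m * Complex.normSq (m - 1)
      < Complex.normSq (m - 1) * Complex.normSq (m + 1) := by
    nlinarith [hm, hnum]
  constructor
  · nlinarith [key, hsum, sq_nonneg (Complex.normSq (m - 1) - Complex.normSq (m + 1)),
      hsq, habs0, sq_nonneg (‖m‖ - 1), sq_nonneg (‖m‖ + 1)]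
  · rw [le_div_iff₀ hz]
    -- abs m * z.im ≤ abs m * (m.im / normSq m) ≤ 1 ≤ 4
    have h1 : z.im ≤ m.im / Complex.normSq m := by
      rw [zim]
      have := div_pos hm hb
      have := div_pos hm hc
      linarith
    have h2 : ‖m‖ * z.im ≤ ‖m‖ * (m.im / Complex.normSq m) := by
      apply mul_le_mul_of_nonneg_left h1 habs0
    have habsp : 0 < ‖m‖ := norm_pos_iff.mpr hm0
    have h3 : ‖m‖ * (m.im / Complex.normSq m) ≤ 1 := by
      rw [← hsq]
      have he : ‖m‖ * (m.im / ‖m‖ ^ 2) = m.im / ‖m‖ := by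
        field_simp
      rw [he, div_le_one habsp]
      exact him
    linarith
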